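/- arXiv:math/9912027 — 7 statements merged into one kernel-verified Lean document; each statement's English description precedes it below -/
import Mathlib

section
/- With respect to Thomas division, any monomial w has at most one Thomas involutive divisor in any finite set U: if u, v ∈ U both Thomas-divide w, then u = v. -/
/-- Monomials in `n` variables as exponent vectors; `u` divides `w`. -/
def mDvd {n : ℕ} (u w : Fin n → ℕ) : Prop := ∀ i, u i ≤ w i

/-- Thomas multiplicative variable. -/
def TMult {n : ℕ} (U : Finset (Fin n → ℕ)) (u : Fin n → ℕ) (i : Fin n) : Prop :=
  u i = U.sup (fun v => v i)

/-- Thomas involutive divisibility. -/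
def TDvd {n : ℕ} (U : Finset (Fin n → ℕ)) (u w : Fin n → ℕ) : Prop :=
  mDvd u w ∧ ∀ i, u i < w i → TMult U u i

/-- Janet multiplicative variable. -/
def JMult {n : ℕ} (U : Finset (Fin n → ℕ)) (u : Fin n → ℕ) (i : Fin n) : Prop :=
  u i = (U.filter (fun v => ∀ j, j < i → v j = u j)).sup (fun v => v i)

/-- Janet involutive divisibility. -/
def JDvd {n : ℕ} (U : Finset (Fin n → ℕ)) (u w : Fin n → ℕ) : Prop :=
  mDvd u w ∧ ∀ i, u i < w i → JMult U u i

/-- Pommaret multiplicative variable: `x_j` is multiplicative for `u` iff all variables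
with index larger than `j` have zero exponent in `u`. -/
def PMult {n : ℕ} (u : Fin n → ℕ) (j : Fin n) : Prop := ∀ i, j < i → u i = 0

/-- Pommaret involutive divisibility. -/
def PDvd {n : ℕ} (u w : Fin n → ℕ) : Prop :=
  mDvd u w ∧ ∀ i, u i < w i → PMult u i

theorem thomas_divisor_unique {n : ℕ} (U : Finset (Fin n → ℕ)) (u v w : Fin n → ℕ)
    (hu : u ∈ U) (hv : v ∈ U) (hdu : TDvd U u w) (hdv : TDvd U v w) : u = v := by
  funext i
  by_contra h
  rcases lt_or_gt_of_ne h with hlt | hlt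
  · have hlw : u i < w i := lt_of_lt_of_le hlt (hdv.1 i)
    have h2 := hdu.2 i hlw
    unfold TMult at h2
    have hsup : v i ≤ U.sup (fun x => x i) := Finset.le_sup (f := fun x => x i) hv
    rw [← h2] at hsup
    exact absurd hsup (not_le.mpr hlt)
  · have hlw : v i < w i := lt_of_lt_of_le hlt (hdu.1 i)
    have h2 := hdv.2 i hlw
    unfold TMult at h2
    have hsup : u i ≤ U.sup (fun x => x i) := Finset.le_sup (f := fun x => x i) hu
    rw [← h2] at hsup
    exact absurd hsup (not_le.mpr hlt)
end

section
/- If a finite monomial set U is autoreduced with respect to Pommaret division (no element of U is a proper Pommaret multiple of another element of U), then for every u ∈ U, every Pommaret-multiplicative variable of u is also Janet-multiplicative: M_P(u,U) ⊆ M_J(u,U). Consequently every Pommaret divisor in U of a monomial w is also a Janet divisor of w. -/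
theorem pommaret_mult_subset_janet_mult_of_autoreduced {n : ℕ}
    (U : Finset (Fin n → ℕ))
    (hauto : ∀ u ∈ U, ∀ v ∈ U, u ≠ v → ¬ PDvd v u) :
    (∀ u ∈ U, ∀ i : Fin n, PMult u i → JMult U u i) ∧
    (∀ u ∈ U, ∀ w : Fin n → ℕ, PDvd u w → JDvd U u w) := by
  have main : ∀ u ∈ U, ∀ i : Fin n, PMult u i → JMult U u i := by
    intro u hu i hP
    unfold JMult
    apply le_antisymm
    · have hmem : u ∈ U.filter (fun v => ∀ j, j < i → v j = u j) := by
        simp only [Finset.mem_filter]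
        simp [hu]
      exact Finset.le_sup (f := fun v : Fin n → ℕ => v i) hmem
    · apply Finset.sup_le
      intro v hv
      rcases Finset.mem_filter.mp hv with ⟨hvU, hagree⟩
      by_contra hlt
      push_neg at hlt
      have hne : v ≠ u := by
        intro h; subst h; exact lt_irrefl _ hlt
      apply hauto v hvU u hu hne
      constructor
      · intro k
        rcases lt_trichotomy k i with h | h | h
        · exact le_of_eq (hagree k h).symm
        · subst h; exact le_of_lt hlt
        · simp [hP k h]
      · intro k hk
        have hki : i ≤ k := by
          by_contra hc
          push_neg at hc
          rw [hagree k hc] at hk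
          exact lt_irrefl _ hk
        intro m hm
        exact hP m (lt_of_le_of_lt hki hm)
  refine ⟨main, fun u hu w hPd => ⟨hPd.1, fun i hi => main u hu i (hPd.2 i hi)⟩⟩
end

section
/- Thomas division is noetherian: for any finite set U of monomials there exists a finite Thomas-involutive set Ũ ⊇ U generating the same monomial ideal, namely the set V of all monomials v dividing h = x₁^{h₁}···xₙ^{hₙ} (where hᵢ = max_{u∈U} deg_i(u)) that are multiples of some element of U. Explicitly: V is Thomas-involutive, i.e., every monomial in the ideal generated by U has a Thomas involutive divisor in V. -/
instance {n : ℕ} (u w : Fin n → ℕ) : Decidable (mDvd u w) := by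
  unfold mDvd; infer_instance

theorem thomas_noetherian {n : ℕ} (U : Finset (Fin n → ℕ)) :
    ∀ h : Fin n → ℕ, h = (fun i => U.sup (fun u => u i)) →
    ∀ V : Finset (Fin n → ℕ),
      V = ((Finset.univ : Finset (∀ i : Fin n, Fin (h i + 1))).image
            (fun f i => (f i : ℕ))).filter (fun v => ∃ u ∈ U, mDvd u v) →
      U ⊆ V ∧
      (∀ w, (∃ u ∈ U, mDvd u w) ↔ (∃ v ∈ V, mDvd v w)) ∧
      (∀ w, (∃ u ∈ U, mDvd u w) → ∃ v ∈ V, TDvd V v w) := by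
  intro h hh V hV
  have hmem : ∀ v : Fin n → ℕ, v ∈ V ↔ (∀ i, v i ≤ h i) ∧ ∃ u ∈ U, mDvd u v := by
    intro v
    rw [hV, Finset.mem_filter, Finset.mem_image]
    constructor
    · rintro ⟨⟨f, -, rfl⟩, h2⟩
      exact ⟨fun i => Nat.lt_succ_iff.mp (f i).isLt, h2⟩
    · rintro ⟨h1, h2⟩
      exact ⟨⟨fun i => ⟨v i, Nat.lt_succ_of_le (h1 i)⟩, Finset.mem_univ _, rfl⟩, h2⟩
  have hUh : ∀ u ∈ U, ∀ i, u i ≤ h i := by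
    intro u hu i; rw [hh]; exact Finset.le_sup (f := fun u => u i) hu
  have hUV : U ⊆ V := by
    intro u hu
    rw [hmem]
    exact ⟨hUh u hu, u, hu, fun i => le_refl _⟩
  refine ⟨hUV, ?_, ?_⟩
  · intro w
    constructor
    · rintro ⟨u, hu, hd⟩; exact ⟨u, hUV hu, hd⟩
    · rintro ⟨v, hv, hd⟩
      obtain ⟨-, u, hu, hd'⟩ := (hmem v).mp hv
      exact ⟨u, hu, fun i => le_trans (hd' i) (hd i)⟩
  · rintro w ⟨u, hu, hd⟩
    refine ⟨fun i => min (w i) (h i), ?_, fun i => min_le_left _ _, ?_⟩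
    · rw [hmem]
      exact ⟨fun i => min_le_right _ _, u, hu, fun i => le_min (hd i) (hUh u hu i)⟩
    · intro i hi
      have hvV : (fun i => min (w i) (h i)) ∈ V := by
        rw [hmem]
        exact ⟨fun i => min_le_right _ _, u, hu, fun i => le_min (hd i) (hUh u hu i)⟩
      simp only at hi
      have hvi : min (w i) (h i) = h i := by omega
      have hle : V.sup (fun x => x i) ≤ h i := by
        apply Finset.sup_le
        intro x hx
        exact ((hmem x).mp hx).1 i
      have hge : min (w i) (h i) ≤ V.sup (fun x => x i) := Finset.le_sup (f := fun x => x i) hvV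
      exact le_antisymm hge (hle.trans_eq hvi.symm)
end

section
/- Janet division is continuous: for any finite monomial set U, any finite sequence u₁,...,u_k of elements of U such that for each i < k there is a Janet-non-multiplicative variable x_j of u_i with u_{i+1} Janet-dividing u_i·x_j, consists of pairwise distinct elements. In fact u_{i+1} ≻_Lex u_i in the lexicographic order, so the sequence is strictly lex-increasing. -/
/-- `x` is lexicographically smaller than `y` (variable order `x₁ ≻ ⋯ ≻ xₙ`). -/
def lexLt {n : ℕ} (x y : Fin n → ℕ) : Prop :=
  ∃ i, (∀ j, j < i → x j = y j) ∧ x i < y i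

lemma key_step {n : ℕ} (U : Finset (Fin n → ℕ)) (a v : Fin n → ℕ) (ha : a ∈ U)
    (j : Fin n) (hj : ¬ JMult U a j) (hd : JDvd U v (a + Pi.single j 1)) : lexLt a v := by
  obtain ⟨hdvd, hmul⟩ := hd
  have hw : ∀ l : Fin n, l ≠ j → (a + Pi.single j 1 : Fin n → ℕ) l = a l := by
    intro l hl; simp [Pi.single_apply, hl]
  have hwj : (a + Pi.single j 1 : Fin n → ℕ) j = a j + 1 := by simp
  have h1 : ∀ m : ℕ, ∀ l : Fin n, (l : ℕ) = m → l < j → v l = a l := by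
    intro m
    induction m using Nat.strong_induction_on with
    | _ m ih =>
      intro l hl hlj
      have hbelow : ∀ t, t < l → v t = a t := fun t ht => ih t (hl ▸ ht) t rfl (ht.trans hlj)
      have hlw := hdvd l
      rw [hw l (Fin.ne_of_lt hlj)] at hlw
      rcases lt_or_eq_of_le hlw with hlt | heq
      · exfalso
        have hm := hmul l (by rw [hw l (Fin.ne_of_lt hlj)]; exact hlt)
        rw [JMult] at hm
        have hamem : a ∈ U.filter (fun t => ∀ m, m < l → t m = v m) := by
          simp only [Finset.mem_filter]
          exact ⟨ha, fun t ht => (hbelow t ht).symm⟩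
        have hale : a l ≤ (U.filter (fun t => ∀ m, m < l → t m = v m)).sup (fun t => t l) :=
          Finset.le_sup (f := fun t : Fin n → ℕ => t l) hamem
        rw [← hm] at hale
        exact absurd hale (not_le.mpr hlt)
      · exact heq
  have hbelowj : ∀ t, t < j → v t = a t := fun t ht => h1 t t rfl ht
  have hvj : v j ≤ a j + 1 := by have := hdvd j; rwa [hwj] at this
  rcases lt_or_eq_of_le hvj with hlt | heq
  · exfalso
    have hm := hmul j (by rw [hwj]; omega)
    rw [JMult] at hm
    have hfil : U.filter (fun t => ∀ m, m < j → t m = v m)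
        = U.filter (fun t => ∀ m, m < j → t m = a m) := by
      apply Finset.filter_congr
      intro t _
      constructor
      · intro h m hm; rw [h m hm]; exact hbelowj m hm
      · intro h m hm; rw [hbelowj m hm]; exact h m hm
    rw [hfil] at hm
    have hamem : a ∈ U.filter (fun t => ∀ m, m < j → t m = a m) := by
      simp [Finset.mem_filter, ha]
    have hale : a j ≤ (U.filter (fun t => ∀ m, m < j → t m = a m)).sup (fun t => t j) :=
      Finset.le_sup (f := fun t : Fin n → ℕ => t j) hamem
    have h2 : a j ≤ v j := by rw [hm]; exact hale
    exact hj (by rw [JMult, ← hm]; exact le_antisymm h2 (Nat.lt_succ_iff.mp hlt))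
  · exact ⟨j, fun t ht => (hbelowj t ht).symm, by omega⟩

lemma chain_strictMono {k : ℕ} {α : Type*} [Preorder α] (f : Fin k → α)
    (h : ∀ i : Fin k, ∀ hik : (i : ℕ) + 1 < k, f i < f ⟨(i : ℕ) + 1, hik⟩) :
    StrictMono f := by
  intro a b hab
  obtain ⟨b, hb⟩ := b
  induction b with
  | zero => exact absurd hab (by simp [Fin.lt_def])
  | succ m ihm =>
    have hm : m < k := Nat.lt_of_succ_lt hb
    have hstep : f ⟨m, hm⟩ < f ⟨m + 1, hb⟩ := h ⟨m, hm⟩ hb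
    rcases lt_or_eq_of_le (Nat.lt_succ_iff.mp hab) with hlt | heq
    · exact lt_trans (ihm hm hlt) hstep
    · have : a = ⟨m, hm⟩ := Fin.ext heq
      rw [this]; exact hstep

lemma lexLt_trans' {n : ℕ} {x y : Fin n → ℕ} (h : lexLt x y) :
    toLex x < toLex y := h

theorem janet_continuous {n k : ℕ} (U : Finset (Fin n → ℕ))
    (u : Fin k → (Fin n → ℕ)) (hU : ∀ i, u i ∈ U)
    (hchain : ∀ i : Fin k, ∀ h : (i : ℕ) + 1 < k, ∃ j : Fin n,
      ¬ JMult U (u i) j ∧ JDvd U (u ⟨(i : ℕ) + 1, h⟩) (u i + Pi.single j 1)) :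
    (∀ i : Fin k, ∀ h : (i : ℕ) + 1 < k, lexLt (u i) (u ⟨(i : ℕ) + 1, h⟩)) ∧
    Function.Injective u := by
  have hlex : ∀ i : Fin k, ∀ h : (i : ℕ) + 1 < k, lexLt (u i) (u ⟨(i : ℕ) + 1, h⟩) := by
    intro i h
    obtain ⟨j, hj, hd⟩ := hchain i h
    exact key_step U (u i) (u ⟨(i : ℕ) + 1, h⟩) (hU i) j hj hd
  refine ⟨hlex, ?_⟩
  have hsm : StrictMono (fun i => toLex (u i)) :=
    chain_strictMono _ (fun i hik => lexLt_trans' (hlex i hik))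
  intro a b hab
  exact hsm.injective (congrArg toLex hab)
end

section
/- Thomas division is continuous, and moreover for Thomas division a non-multiplicative prolongation can only be involutively divided by itself: if u, u' are elements of a finite set U, x_j is Thomas-non-multiplicative for u, and u' Thomas-divides u·x_j, then u' = u·x_j. Consequently any sequence u₁,...,u_k in U with u_{i+1} Thomas-dividing u_i·x_{j_i} (x_{j_i} non-multiplicative for u_i) has strictly increasing total degrees, hence pairwise distinct elements. -/
private lemma thomas_key {n : ℕ} (U : Finset (Fin n → ℕ)) :
    ∀ u ∈ U, ∀ u' ∈ U, ∀ j : Fin n, ¬ TMult U u j →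
        TDvd U u' (u + Pi.single j 1) → u' = u + Pi.single j 1 := by
  intro u hu u' hu' j hj hTd
  obtain ⟨hdvd, hmul⟩ := hTd
  have hsup : ∀ (v) (_ : v ∈ U) (i : Fin n), v i ≤ U.sup (fun v => v i) := by
    intro v hv i
    exact Finset.le_sup (f := fun v => v i) hv
  have hujlt : u j < U.sup (fun v => v j) :=
    lt_of_le_of_ne (hsup u hu j) hj
  funext i
  by_contra hne
  have hlt : u' i < ((u + Pi.single j 1 : Fin n → ℕ) i) := lt_of_le_of_ne (hdvd i) hne
  have hm := hmul i hlt
  rw [TMult] at hm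
  have h1 : ((u + Pi.single j 1 : Fin n → ℕ) i) ≤ U.sup (fun v => v i) := by
    by_cases hij : i = j
    · subst hij
      simpa [Pi.single_apply] using hujlt
    · simpa [Pi.single_apply, hij] using hsup u hu i
  exact absurd (hm ▸ h1) (not_le.mpr hlt)

theorem thomas_continuous {n : ℕ} (U : Finset (Fin n → ℕ)) :
    (∀ u ∈ U, ∀ u' ∈ U, ∀ j : Fin n, ¬ TMult U u j →
        TDvd U u' (u + Pi.single j 1) → u' = u + Pi.single j 1) ∧
    (∀ (k : ℕ) (u : Fin k → (Fin n → ℕ)), (∀ i, u i ∈ U) →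
      (∀ i : Fin k, ∀ h : (i : ℕ) + 1 < k, ∃ j : Fin n,
        ¬ TMult U (u i) j ∧ TDvd U (u ⟨(i : ℕ) + 1, h⟩) (u i + Pi.single j 1)) →
      (∀ i : Fin k, ∀ h : (i : ℕ) + 1 < k,
          (∑ t, u i t) < ∑ t, u ⟨(i : ℕ) + 1, h⟩ t) ∧ Function.Injective u) := by
  refine ⟨thomas_key U, ?_⟩
  intro k u hU hchain
  have step : ∀ i : Fin k, ∀ h : (i : ℕ) + 1 < k,
      (∑ t, u i t) < ∑ t, u ⟨(i : ℕ) + 1, h⟩ t := by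
    intro i h
    obtain ⟨j, hj, hdvd⟩ := hchain i h
    have heq := thomas_key U (u i) (hU i) (u ⟨(i : ℕ) + 1, h⟩) (hU _) j hj hdvd
    rw [heq]
    simp [Finset.sum_add_distrib, Finset.sum_pi_single']
  refine ⟨step, ?_⟩
  have step' : ∀ b a : ℕ, ∀ (hb : b < k) (ha : a < k), a < b →
      (∑ t, u ⟨a, ha⟩ t) < ∑ t, u ⟨b, hb⟩ t := by
    intro b
    induction b with
    | zero => intro a hb ha h; omega
    | succ b ih =>
      intro a hb ha h
      have hb' : b < k := by omega
      rcases Nat.lt_or_ge a b with h' | h'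
      · exact lt_trans (ih a hb' ha h') (step ⟨b, hb'⟩ hb)
      · have : a = b := by omega
        subst this
        exact step ⟨a, hb'⟩ hb
  have hmono : StrictMono (fun i : Fin k => ∑ t, u i t) := by
    intro ⟨a, ha⟩ ⟨b, hb⟩ h
    exact step' b a hb ha (by simpa [Fin.mk_lt_mk] using h)
  intro a b hab
  exact hmono.injective (by simp [hab])
end

section
/- Let L be a continuous involutive division and U a finite monomial set. If U is locally L-involutive (for every u ∈ U and every L-non-multiplicative variable xᵢ of u, the monomial u·xᵢ has an L-involutive divisor in U), then U is L-involutive: every multiple of an element of U has an L-involutive divisor in U. -/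
/-- An abstract involutive division: to each element `u` of a finite monomial set `U` it
assigns a submonoid `L u U` of multiplicative monomials, satisfying the axioms
(a)-(d) of Gerdt-Blinkov. -/
structure InvDiv (n : ℕ) where
  L : (Fin n → ℕ) → Finset (Fin n → ℕ) → Set (Fin n → ℕ)
  zero_mem : ∀ u U, (0 : Fin n → ℕ) ∈ L u U
  add_mem : ∀ u U v w, v ∈ L u U → w ∈ L u U → v + w ∈ L u U
  div_closed : ∀ u U v w, w ∈ L u U → mDvd v w → v ∈ L u U
  comparable : ∀ (U : Finset (Fin n → ℕ)) (u v : Fin n → ℕ), u ∈ U → v ∈ U →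
      (∃ a ∈ L u U, ∃ b ∈ L v U, u + a = v + b) →
      (∃ b ∈ L v U, u = v + b) ∨ (∃ a ∈ L u U, v = u + a)
  trans : ∀ (U : Finset (Fin n → ℕ)) (u v : Fin n → ℕ), u ∈ U → v ∈ U →
      (∃ a ∈ L u U, v = u + a) → L v U ⊆ L u U
  mono : ∀ (U V : Finset (Fin n → ℕ)), V ⊆ U → ∀ u ∈ V, L u U ⊆ L u V

/-- `u` involutively divides `w` with respect to `D` and the set `U`. -/
def LDvd {n : ℕ} (D : InvDiv n) (U : Finset (Fin n → ℕ)) (u w : Fin n → ℕ) : Prop :=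
  ∃ a ∈ D.L u U, w = u + a

/-- If every variable occurring in `x` is multiplicative for `v`, then `x` is multiplicative. -/
lemma mem_L_of_singles {n : ℕ} (D : InvDiv n) (v : Fin n → ℕ) (U : Finset (Fin n → ℕ))
    (x : Fin n → ℕ) (h : ∀ j, 1 ≤ x j → Pi.single j 1 ∈ D.L v U) : x ∈ D.L v U := by
  have key : ∀ N (x : Fin n → ℕ), (∑ j, x j) = N →
      (∀ j, 1 ≤ x j → Pi.single j 1 ∈ D.L v U) → x ∈ D.L v U := by
    intro N
    induction N using Nat.strong_induction_on with
    | _ N ih =>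
      intro x hx hsing
      by_cases hx0 : x = 0
      · subst hx0; exact D.zero_mem v U
      · obtain ⟨j, hj⟩ : ∃ j, 1 ≤ x j := by
          by_contra hc; push_neg at hc; apply hx0; funext i
          have := hc i; simp only [Pi.zero_apply]; omega
        have hxj : x = Pi.single j 1 + (x - Pi.single j 1 : Fin n → ℕ) := by
          funext i
          by_cases hij : i = j
          · subst hij; simp [Pi.single_apply]; omega
          · simp [Pi.single_apply, hij]
        have hsum : (∑ i, (x - Pi.single j 1 : Fin n → ℕ) i) < N := by
          rw [← hx]
          have h1 : (x - Pi.single j 1 : Fin n → ℕ) j < x j := by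
            simp [Pi.single_apply]; omega
          have h2 : ∀ i, (x - Pi.single j 1 : Fin n → ℕ) i ≤ x i := by
            intro i; simp [Pi.sub_apply]
          exact Finset.sum_lt_sum (fun i _ => h2 i) ⟨j, Finset.mem_univ j, h1⟩
        have hmem : (x - Pi.single j 1 : Fin n → ℕ) ∈ D.L v U := by
          refine ih _ hsum _ rfl (fun j' hj' => hsing j' ?_)
          have : (x - Pi.single j 1 : Fin n → ℕ) j' ≤ x j' := by simp [Pi.sub_apply]
          omega
        rw [hxj]
        exact D.add_mem v U _ _ (hsing j hj) hmem
  exact key _ x rfl h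

theorem locally_involutive_of_continuous {n : ℕ} (D : InvDiv n)
    (hcont : ∀ (U : Finset (Fin n → ℕ)) (k : ℕ) (u : Fin k → (Fin n → ℕ)),
      (∀ i, u i ∈ U) →
      (∀ i : Fin k, ∀ h : (i : ℕ) + 1 < k, ∃ j : Fin n,
        Pi.single j 1 ∉ D.L (u i) U ∧
        LDvd D U (u ⟨(i : ℕ) + 1, h⟩) (u i + Pi.single j 1)) →
      Function.Injective u)
    (U : Finset (Fin n → ℕ))
    (hloc : ∀ u ∈ U, ∀ j : Fin n, Pi.single j 1 ∉ D.L u U →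
      ∃ v ∈ U, LDvd D U v (u + Pi.single j 1)) :
    ∀ u ∈ U, ∀ w : Fin n → ℕ, ∃ v ∈ U, LDvd D U v (u + w) := by
  intro u hu w
  by_contra hcon
  push_neg at hcon
  -- hcon : ∀ v ∈ U, ¬ LDvd D U v (u + w)
  set P : (Fin n → ℕ) × (Fin n → ℕ) → Prop :=
    fun p => p.1 ∈ U ∧ u + w = p.1 + p.2 with hP
  have hnotL : ∀ p, P p → p.2 ∉ D.L p.1 U := by
    rintro ⟨v, x⟩ ⟨hv, hvx⟩ hxL
    exact hcon v hv ⟨x, hxL, hvx⟩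
  have step : ∀ p, P p → ∃ q, P q ∧ ∃ j : Fin n,
      Pi.single j 1 ∉ D.L p.1 U ∧ LDvd D U q.1 (p.1 + Pi.single j 1) := by
    rintro ⟨v, x⟩ hp
    obtain ⟨hv, hvx⟩ := hp
    have hxL : x ∉ D.L v U := hnotL (v, x) ⟨hv, hvx⟩
    obtain ⟨j, hj1, hjL⟩ : ∃ j, 1 ≤ x j ∧ Pi.single j 1 ∉ D.L v U := by
      by_contra hc; push_neg at hc
      exact hxL (mem_L_of_singles D v U x hc)
    obtain ⟨v', hv', a, haL, hva⟩ := hloc v hv j hjL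
    refine ⟨(v', a + (x - Pi.single j 1 : Fin n → ℕ)), ⟨hv', ?_⟩, j, hjL, a, haL, hva⟩
    have : v + Pi.single j 1 + (x - Pi.single j 1 : Fin n → ℕ) = v + x := by
      funext i
      by_cases hij : i = j
      · subst hij; simp [Pi.single_apply]; omega
      · simp [Pi.single_apply, hij]
    calc u + w = v + x := hvx
      _ = v + Pi.single j 1 + (x - Pi.single j 1 : Fin n → ℕ) := this.symm
      _ = v' + a + (x - Pi.single j 1 : Fin n → ℕ) := by rw [hva]
      _ = v' + (a + (x - Pi.single j 1 : Fin n → ℕ)) := by ring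
  classical
  let f : ℕ → (Fin n → ℕ) × (Fin n → ℕ) := fun k =>
    Nat.rec ((u, w)) (fun _ p => if h : P p then (step p h).choose else p) k
  have hf0 : P (f 0) := ⟨hu, rfl⟩
  have hfP : ∀ k, P (f k) := by
    intro k
    induction k with
    | zero => exact hf0
    | succ k ih =>
      show P (if h : P (f k) then (step (f k) h).choose else f k)
      rw [dif_pos ih]
      exact (step (f k) ih).choose_spec.1
  have hchain : ∀ k, ∃ j : Fin n, Pi.single j 1 ∉ D.L (f k).1 U ∧
      LDvd D U (f (k+1)).1 ((f k).1 + Pi.single j 1) := by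
    intro k
    have : f (k+1) = (step (f k) (hfP k)).choose := by
      show (if h : P (f k) then (step (f k) h).choose else f k) = _
      rw [dif_pos (hfP k)]
    rw [this]
    exact (step (f k) (hfP k)).choose_spec.2
  have hinj : Function.Injective (fun i : Fin (U.card + 1) => (f i).1) := by
    apply hcont U (U.card + 1) _ (fun i => (hfP i).1)
    intro i h
    exact hchain i
  have : U.card + 1 ≤ U.card := by
    have hcard := Fintype.card_le_of_injective
      (fun i : Fin (U.card + 1) => (⟨(f i).1, (hfP i).1⟩ : {x // x ∈ U}))
      (fun a b hab => hinj (congrArg Subtype.val hab))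
    simpa using hcard
  omega
end

section
/- The set U = {xy, y², z} in K[x,y,z] with the variable order x ≻ y ≻ z is not finitely generated with respect to Pommaret division: there is no finite Pommaret-involutive set Ũ ⊇ U generating the same monomial ideal. In particular every Pommaret-involutive completion must contain all monomials xᵏy and xᵐz for all k, m ≥ 1. Hence Pommaret division is not noetherian. -/
lemma main_lemma (U : Finset (Fin 3 → ℕ))
    (hU : U = {![1,1,0], ![0,2,0], ![0,0,1]})
    (V : Set (Fin 3 → ℕ)) (hUV : ↑U ⊆ V)
    (hgen : ∀ w, (∃ u ∈ U, mDvd u w) ↔ (∃ v ∈ V, mDvd v w))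
    (hinv : ∀ w, (∃ v ∈ V, mDvd v w) → ∃ v ∈ V, PDvd v w)
    (k : ℕ) (hk : 1 ≤ k) :
    (![k,1,0] : Fin 3 → ℕ) ∈ V ∧ (![k,0,1] : Fin 3 → ℕ) ∈ V := by
  subst hU
  have hxy : (![1,1,0] : Fin 3 → ℕ) ∈ ({![1,1,0], ![0,2,0], ![0,0,1]} : Finset (Fin 3 → ℕ)) := by simp
  have hz : (![0,0,1] : Fin 3 → ℕ) ∈ ({![1,1,0], ![0,2,0], ![0,0,1]} : Finset (Fin 3 → ℕ)) := by
    simp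
  have hmemI : ∀ v ∈ V, ∃ u ∈ ({![1,1,0], ![0,2,0], ![0,0,1]} : Finset (Fin 3 → ℕ)), mDvd u v :=
    fun v hv => (hgen v).mpr ⟨v, hv, fun i => le_refl _⟩
  constructor
  · -- w = ![k,1,0]
    have h1 : ∃ v ∈ V, mDvd v ![k,1,0] := by
      refine (hgen _).mp ⟨![1,1,0], hxy, ?_⟩
      intro i; fin_cases i <;> simp [hk]
    obtain ⟨v, hv, hdvd, hmult⟩ := hinv _ h1
    obtain ⟨u, hu, hud⟩ := hmemI v hv
    have hv1 : v 1 ≤ 1 := by simpa using hdvd 1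
    have hv2 : v 2 = 0 := by simpa using hdvd 2
    have hv0 : v 0 ≤ k := by simpa using hdvd 0
    simp only [Finset.mem_insert, Finset.mem_singleton] at hu
    have huxy : u = ![1,1,0] := by
      rcases hu with h | h | h
      · exact h
      · exfalso; have := hud 1; rw [h] at this; simp at this; omega
      · exfalso; have := hud 2; rw [h] at this; simp at this; omega
    rw [huxy] at hud
    have h01 : (1:ℕ) ≤ v 1 := by simpa using hud 1
    have h00 : (1:ℕ) ≤ v 0 := by simpa using hud 0
    have hv0k : v 0 = k := by
      by_contra h
      have hlt : v 0 < k := lt_of_le_of_ne hv0 h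
      have := hmult 0 (by simpa using hlt) 1 (by decide)
      omega
    have : v = ![k,1,0] := by
      funext i; fin_cases i <;> simp_all <;> omega
    rwa [this] at hv
  · -- w = ![k,0,1]
    have h1 : ∃ v ∈ V, mDvd v ![k,0,1] := by
      refine (hgen _).mp ⟨![0,0,1], hz, ?_⟩
      intro i; fin_cases i <;> simp
    obtain ⟨v, hv, hdvd, hmult⟩ := hinv _ h1
    obtain ⟨u, hu, hud⟩ := hmemI v hv
    have hv1 : v 1 = 0 := by simpa using hdvd 1
    have hv2 : v 2 ≤ 1 := by simpa using hdvd 2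
    have hv0 : v 0 ≤ k := by simpa using hdvd 0
    simp only [Finset.mem_insert, Finset.mem_singleton] at hu
    have huz : u = ![0,0,1] := by
      rcases hu with h | h | h
      · exfalso; have := hud 1; rw [h] at this; simp at this; omega
      · exfalso; have := hud 1; rw [h] at this; simp at this; omega
      · exact h
    rw [huz] at hud
    have h02 : (1:ℕ) ≤ v 2 := by simpa using hud 2
    have hv0k : v 0 = k := by
      by_contra h
      have hlt : v 0 < k := lt_of_le_of_ne hv0 h
      have := hmult 0 (by simpa using hlt) 2 (by decide)
      omega
    have : v = ![k,0,1] := by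
      funext i; fin_cases i <;> simp_all <;> omega
    rwa [this] at hv

theorem pommaret_not_noetherian_example :
    ∀ U : Finset (Fin 3 → ℕ),
      U = {![1,1,0], ![0,2,0], ![0,0,1]} →
      (¬ ∃ V : Finset (Fin 3 → ℕ), U ⊆ V ∧
          (∀ w, (∃ u ∈ U, mDvd u w) ↔ (∃ v ∈ V, mDvd v w)) ∧
          (∀ w, (∃ v ∈ V, mDvd v w) → ∃ v ∈ V, PDvd v w)) ∧
      (∀ V : Set (Fin 3 → ℕ), ↑U ⊆ V →
          (∀ w, (∃ u ∈ U, mDvd u w) ↔ (∃ v ∈ V, mDvd v w)) →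
          (∀ w, (∃ v ∈ V, mDvd v w) → ∃ v ∈ V, PDvd v w) →
          ∀ k : ℕ, 1 ≤ k →
            (![k,1,0] : Fin 3 → ℕ) ∈ V ∧ (![k,0,1] : Fin 3 → ℕ) ∈ V) := by
  intro U hU
  refine ⟨?_, fun V hUV hgen hinv k hk => main_lemma U hU V hUV hgen hinv k hk⟩
  rintro ⟨V, hUV, hgen, hinv⟩
  have hmem : ∀ k : ℕ, (![k+1,1,0] : Fin 3 → ℕ) ∈ (↑V : Set (Fin 3 → ℕ)) := by
    intro k
    exact (main_lemma U hU ↑V (by exact_mod_cast fun x hx => hUV hx)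
      (by simpa using hgen) (by simpa using hinv) (k+1) (by omega)).1
  have hinj : Function.Injective (fun k : ℕ => (![k+1,1,0] : Fin 3 → ℕ)) := by
    intro a b h
    have := congrFun h 0
    simpa using this
  exact (Set.infinite_of_injective_forall_mem hinj hmem) V.finite_toSet
end
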